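/- Let K be a field, k ≥ 1, and n = 2k. Let C ≤ U^n(K) be a K-subspace such that every nonzero Δ ∈ C satisfies frk(Δ) ≥ k(k+1). Then dim_K(C) ≤ k+1. -/

import Mathlib

/-- The space `U^n(K)` of upper triangular `n × n` matrices over `K`,
as a `K`-subspace of the matrix space. -/
def UT (K : Type*) [Field K] (n : ℕ) : Submodule K (Matrix (Fin n) (Fin n) K) where
  carrier := {A | ∀ i j : Fin n, (j : ℕ) < (i : ℕ) → A i j = 0}
  add_mem' := by
    intro a b ha hb i j h
    simp [Matrix.add_apply, ha i j h, hb i j h]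
  zero_mem' := by
    intro i j h
    simp
  smul_mem' := by
    intro c a ha i j h
    simp [Matrix.smul_apply, ha i j h]

/-- For `Δ ∈ U^n(K)` and `i : Fin n` (representing the 1-indexed value `i+1`),
the upper-right corner submatrix `Δ_[i+1] ∈ K^{(i+1) × (n+1-(i+1))}`,
consisting of the entries `Δ_{k,ℓ}` with (1-indexed) `1 ≤ k ≤ i+1`, `i+1 ≤ ℓ ≤ n`. -/
def corner {K : Type*} [Field K] {n : ℕ} (Δ : Matrix (Fin n) (Fin n) K) (i : Fin n) :
    Matrix (Fin ((i : ℕ) + 1)) (Fin (n + 1 - ((i : ℕ) + 1))) K :=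
  Matrix.of fun k l =>
    Δ ⟨k, by have := k.isLt; have := i.isLt; omega⟩
      ⟨(i : ℕ) + l, by have := l.isLt; have := i.isLt; omega⟩

/-- The flag rank of an upper triangular matrix: the sum of the ranks of its
upper-right corner submatrices, `frk Δ = Σ_{i=1}^{n} rank Δ_[i]`. -/
noncomputable def frk {K : Type*} [Field K] {n : ℕ} (Δ : Matrix (Fin n) (Fin n) K) : ℕ :=
  ∑ i : Fin n, (corner Δ i).rank

lemma sum_min_eq (k : ℕ) :
    ∑ i ∈ Finset.range (2 * k), min (i + 1) (2 * k - i) = k * (k + 1) := by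
  have hsplit : ∑ i ∈ Finset.range (2*k), min (i+1) (2*k - i)
      = (∑ i ∈ Finset.range k, min (i+1) (2*k - i))
        + ∑ i ∈ Finset.Ico k (2*k), min (i+1) (2*k - i) := by
    rw [Finset.range_eq_Ico, ← Finset.sum_Ico_consecutive _ (Nat.zero_le k) (by omega), ← Finset.range_eq_Ico]
  have h1 : ∑ i ∈ Finset.range k, min (i+1) (2*k - i) = ∑ i ∈ Finset.range k, (i+1) := by
    refine Finset.sum_congr rfl fun i hi => ?_
    have := Finset.mem_range.mp hi
    omega
  have h2 : ∑ i ∈ Finset.Ico k (2*k), min (i+1) (2*k - i) = ∑ i ∈ Finset.range k, (i+1) := by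
    rw [Finset.sum_Ico_eq_sum_range]
    have : 2*k - k = k := by omega
    rw [this]
    have hr := Finset.sum_range_reflect (fun j => j + 1) k
    rw [← hr]
    refine Finset.sum_congr rfl fun i hi => ?_
    have := Finset.mem_range.mp hi
    omega
  have h3 : (∑ i ∈ Finset.range k, (i+1)) * 2 = k * (k+1) := by
    have := Finset.sum_range_id_mul_two (k+1)
    rw [Finset.sum_range_succ'] at this
    simpa [Nat.add_mul, Nat.mul_add] using this
  omega

lemma rank_corner_le {K : Type*} [Field K] {n : ℕ} (Δ : Matrix (Fin n) (Fin n) K) (i : Fin n) :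
    (corner Δ i).rank ≤ min ((i : ℕ) + 1) (n - (i : ℕ)) := by
  refine le_min ?_ ?_
  · simpa using (corner Δ i).rank_le_card_height
  · have h := (corner Δ i).rank_le_card_width
    simp only [Fintype.card_fin] at h
    have hi := i.isLt
    omega


/-- Odd case `n + 1 = 2k + 1`: any flag rank metric code `C ≤ U^n(K)` whose nonzero
elements all have flag rank at least `k(k+1)` (i.e. with minimum distance `k(k+1)`)
has dimension at most `k + 1`. -/
theorem dim_le_of_maxdist_odd {K : Type*} [Field K] (k : ℕ) (hk : 1 ≤ k)
    (C : Submodule K (Matrix (Fin (2 * k)) (Fin (2 * k)) K))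
    (hC : C ≤ UT K (2 * k))
    (hmin : ∀ Δ ∈ C, Δ ≠ 0 → k * (k + 1) ≤ frk Δ) :
    Module.finrank K ↥C ≤ k + 1 := by
  classical
  set mid : Fin (2 * k) := ⟨k - 1, by omega⟩ with hmid
  -- the linear map sending Δ to the first row of its middle corner
  let φ : Matrix (Fin (2*k)) (Fin (2*k)) K →ₗ[K] (Fin (2*k + 1 - ((mid : ℕ) + 1)) → K) :=
    { toFun := fun Δ => fun l => corner Δ mid ⟨0, Nat.succ_pos _⟩ l
      map_add' := by intro a b; funext l; simp [corner]
      map_smul' := by intro c a; funext l; simp [corner] }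
  have hinj : Function.Injective (φ.comp C.subtype) := by
    rw [← LinearMap.ker_eq_bot, Submodule.eq_bot_iff]
    intro Δ hΔ
    by_contra hne
    have hΔ0 : (Δ : Matrix (Fin (2*k)) (Fin (2*k)) K) ≠ 0 := by
      simpa [Submodule.coe_eq_zero] using hne
    have hfrk := hmin (Δ : Matrix (Fin (2*k)) (Fin (2*k)) K) Δ.2 hΔ0
    -- first row of the middle corner vanishes
    have hrow : ∀ l, corner (Δ : Matrix (Fin (2*k)) (Fin (2*k)) K) mid ⟨0, Nat.succ_pos _⟩ l = 0 := by
      intro l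
      have := congrFun (LinearMap.mem_ker.mp hΔ) l
      simpa [φ] using this
    set M := corner (Δ : Matrix (Fin (2*k)) (Fin (2*k)) K) mid with hM
    -- rank of the middle corner is at least k
    have hge : k ≤ M.rank := by
      have htot : frk (Δ : Matrix (Fin (2*k)) (Fin (2*k)) K)
          = M.rank + ∑ i ∈ Finset.univ.erase mid,
              (corner (Δ : Matrix (Fin (2*k)) (Fin (2*k)) K) i).rank := by
        rw [frk, ← Finset.add_sum_erase _ _ (Finset.mem_univ mid)]
      have hbound : ∑ i ∈ Finset.univ.erase mid,
          (corner (Δ : Matrix (Fin (2*k)) (Fin (2*k)) K) i).rank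
          ≤ ∑ i ∈ Finset.univ.erase mid, min ((i : ℕ) + 1) (2*k - (i : ℕ)) :=
        Finset.sum_le_sum fun i _ => rank_corner_le _ i
      have htotal : ∑ i : Fin (2*k), min ((i : ℕ) + 1) (2*k - (i : ℕ)) = k * (k+1) := by
        rw [Fin.sum_univ_eq_sum_range (fun i => min (i + 1) (2*k - i))]
        exact sum_min_eq k
      have heq : min ((mid : ℕ) + 1) (2*k - (mid : ℕ))
          + ∑ i ∈ Finset.univ.erase mid, min ((i : ℕ) + 1) (2*k - (i : ℕ))
          = ∑ i : Fin (2*k), min ((i : ℕ) + 1) (2*k - (i : ℕ)) :=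
        Finset.add_sum_erase Finset.univ
          (fun i : Fin (2*k) => min ((i : ℕ) + 1) (2*k - (i : ℕ))) (Finset.mem_univ mid)
      have hmidval : min ((mid : ℕ) + 1) (2*k - (mid : ℕ)) = k := by
        simp only [hmid]
        omega
      omega
    have hle : M.rank ≤ (mid : ℕ) + 1 := by simpa using M.rank_le_card_height
    have hmidk : (mid : ℕ) + 1 = k := by simp [hmid]; omega
    have hrk : M.rank = (mid : ℕ) + 1 := by omega
    -- hence mulVecLin is surjective
    have htop : LinearMap.range M.mulVecLin = ⊤ := by
      apply Submodule.eq_top_of_finrank_eq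
      rw [Module.finrank_fin_fun]
      exact hrk
    obtain ⟨v, hv⟩ : ∃ v, M.mulVec v = Pi.single (⟨0, Nat.succ_pos _⟩ : Fin ((mid : ℕ) + 1)) 1 := by
      have : Pi.single (⟨0, Nat.succ_pos _⟩ : Fin ((mid : ℕ) + 1)) (1 : K)
          ∈ LinearMap.range M.mulVecLin := htop ▸ Submodule.mem_top
      obtain ⟨v, hv⟩ := this
      exact ⟨v, hv⟩
    have hrow0 : ∀ l, M 0 l = 0 := fun l => hrow l
    have h0 : M.mulVec v (⟨0, Nat.succ_pos _⟩ : Fin ((mid : ℕ) + 1)) = 0 := by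
      simp [Matrix.mulVec, dotProduct, hrow0]
    rw [hv, Pi.single_eq_same] at h0
    exact one_ne_zero h0
  have hfin := LinearMap.finrank_le_finrank_of_injective hinj
  have : Module.finrank K (Fin (2*k + 1 - ((mid : ℕ) + 1)) → K) = k + 1 := by
    rw [Module.finrank_fin_fun]
    simp [hmid]
    omega
  omega
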